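/- Let A(ξ) be a family of uniformly φ-positive operators on a Banach space E and L(ξ) ∈ S_{φ₁} with φ+φ₁ < π, and suppose the scalar symbol satisfies |L(ξ)| > C|ξ|^l Σ_{k=0}^l |â_k(ξ)| where L(ξ) = Σ_{k=0}^l â_k(ξ)(iξ)^k. Then for λ ∈ S_φ with |λ| ≥ λ₀ > 0, the operator-function σ₂(ξ,λ) = Σ_{k=0}^l |λ|^{1−k/l} â_k(ξ)(iξ)^k [A(ξ)+λ+L(ξ)]^{-1} satisfies ‖σ₂(ξ,λ)‖_{B(E)} ≤ C uniformly in ξ ∈ ℝ and λ, provided â_k ∈ L^∞(ℝ). -/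

import Mathlib

open Finset

open Complex in
lemma sector_add {φ φ₁ : ℝ} (hφ : 0 ≤ φ) (hφ₁ : 0 ≤ φ₁) (hangle : φ + φ₁ < Real.pi)
    {z w : ℂ} (hz : z ≠ 0) (hw : w ≠ 0) (hza : |z.arg| ≤ φ) (hwa : |w.arg| ≤ φ₁) :
    |(z + w).arg| ≤ max φ φ₁ ∧
      Real.cos ((φ + φ₁) / 2) * (‖z‖ + ‖w‖) ≤ ‖(z + w)‖ := by
  set α := z.arg with hα
  set β := w.arg with hβ
  set γ := (α + β) / 2 with hγ
  set δ := (α - β) / 2 with hδ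
  set r := ‖z‖ with hr
  set s := ‖w‖ with hs
  have hrpos : 0 < r := by simpa [hr] using norm_pos_iff.mpr hz
  have hspos : 0 < s := by simpa [hs] using norm_pos_iff.mpr hw
  have hδb : |δ| ≤ (φ + φ₁) / 2 := by
    rw [hδ, abs_div, (abs_of_pos (by norm_num : (0:ℝ) < 2))]
    have h1 : |α - β| ≤ |α| + |β| := abs_sub α β
    have : |α - β| ≤ φ + φ₁ := h1.trans (by linarith)
    linarith
  have hhalf : (φ + φ₁) / 2 < Real.pi / 2 := by linarith
  have hhalf0 : 0 ≤ (φ + φ₁) / 2 := by linarith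
  have hcpos : 0 < Real.cos ((φ + φ₁) / 2) :=
    Real.cos_pos_of_mem_Ioo ⟨by linarith [Real.pi_pos], hhalf⟩
  have hcosδ : Real.cos ((φ + φ₁) / 2) ≤ Real.cos δ := by
    rw [← Real.cos_abs δ]
    exact Real.cos_le_cos_of_nonneg_of_le_pi (abs_nonneg δ) (by linarith [Real.pi_pos]) hδb
  have hcosδpos : 0 < Real.cos δ := lt_of_lt_of_le hcpos hcosδ
  set u : ℂ := ↑r * Complex.exp (↑δ * I) + ↑s * Complex.exp (-↑δ * I) with hu
  have hsum : z + w = Complex.exp (↑γ * I) * u := by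
    have hz' : z = ↑r * Complex.exp (↑α * I) := (Complex.norm_mul_exp_arg_mul_I z).symm
    have hw' : w = ↑s * Complex.exp (↑β * I) := (Complex.norm_mul_exp_arg_mul_I w).symm
    have e1 : Complex.exp (↑γ * I) * Complex.exp (↑δ * I) = Complex.exp (↑α * I) := by
      rw [← Complex.exp_add]; congr 1
      have : γ + δ = α := by rw [hγ, hδ]; ring
      push_cast [← this]; ring
    have e2 : Complex.exp (↑γ * I) * Complex.exp (-↑δ * I) = Complex.exp (↑β * I) := by
      rw [← Complex.exp_add]; congr 1
      have : γ + -δ = β := by rw [hγ, hδ]; ring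
      push_cast [← this]; ring
    rw [hu, mul_add, mul_left_comm (Complex.exp (↑γ * I)) (r : ℂ),
      mul_left_comm (Complex.exp (↑γ * I)) (s : ℂ), e1, e2, ← hz', ← hw']
  have hure : u.re = (r + s) * Real.cos δ := by
    simp [hu, Complex.add_re, ← Complex.ofReal_neg, Complex.exp_ofReal_mul_I_re, Real.cos_neg,
      Complex.exp_ofReal_mul_I_im, Real.sin_neg]
    ring
  have huabs : ‖(z + w)‖ = ‖u‖ := by
    rw [hsum, norm_mul, Complex.norm_exp_ofReal_mul_I, one_mul]
  have huabs_le : ‖u‖ ≤ r + s := by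
    rw [← huabs]; exact (norm_add_le z w)
  have hre_le : u.re ≤ ‖u‖ := Complex.re_le_norm u
  have hlow : Real.cos ((φ + φ₁) / 2) * (r + s) ≤ ‖(z + w)‖ := by
    rw [huabs]
    calc Real.cos ((φ + φ₁) / 2) * (r + s) ≤ Real.cos δ * (r + s) := by
          exact mul_le_mul_of_nonneg_right hcosδ (by positivity)
      _ = u.re := by rw [hure]; ring
      _ ≤ ‖u‖ := hre_le
  have hupos : 0 < u.re := by rw [hure]; positivity
  have hune : u ≠ 0 := fun h => by simp [h] at hupos
  have huabspos : 0 < ‖u‖ := norm_pos_iff.mpr hune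
  -- |arg u| ≤ |δ|
  have hcosarg : Real.cos δ ≤ Real.cos (Complex.arg u) := by
    rw [Complex.cos_arg hune, le_div_iff₀ huabspos]
    calc Real.cos δ * ‖u‖ ≤ Real.cos δ * (r + s) := by gcongr
      _ = u.re := by rw [hure]; ring
  have hargu : |Complex.arg u| ≤ |δ| := by
    by_contra h
    push_neg at h
    have h2 : Real.cos |Complex.arg u| < Real.cos |δ| := by
      apply Real.cos_lt_cos_of_nonneg_of_le_pi (abs_nonneg δ) (Complex.abs_arg_le_pi u) h
    rw [Real.cos_abs, Real.cos_abs] at h2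
    linarith
  -- bounds on γ + arg u
  have hub : γ + Complex.arg u ≤ max φ φ₁ := by
    have h1 : Complex.arg u ≤ |δ| := (le_abs_self _).trans hargu
    have h2 : γ + |δ| ≤ max φ φ₁ := by
      rcases le_total α β with hc | hc
      · have : |δ| = (β - α) / 2 := by rw [hδ, abs_div, (abs_of_pos (by norm_num : (0:ℝ) < 2)), _root_.abs_of_nonpos (by linarith)]; ring
        rw [this, hγ]
        have : β ≤ φ₁ := (le_abs_self β).trans hwa
        have := le_max_right φ φ₁; linarith
      · have : |δ| = (α - β) / 2 := by rw [hδ, abs_div, (abs_of_pos (by norm_num : (0:ℝ) < 2)), _root_.abs_of_nonneg (by linarith)]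
        rw [this, hγ]
        have : α ≤ φ := (le_abs_self α).trans hza
        have := le_max_left φ φ₁; linarith
    linarith
  have hlb : -(max φ φ₁) ≤ γ + Complex.arg u := by
    have h1 : -|δ| ≤ Complex.arg u := le_trans (neg_le_neg hargu) (neg_abs_le _)
    have h2 : -(max φ φ₁) ≤ γ - |δ| := by
      rcases le_total α β with hc | hc
      · have : |δ| = (β - α) / 2 := by rw [hδ, abs_div, (abs_of_pos (by norm_num : (0:ℝ) < 2)), _root_.abs_of_nonpos (by linarith)]; ring
        rw [this, hγ]
        have : -φ ≤ α := by have := neg_abs_le α; linarith [hza]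
        have := le_max_left φ φ₁; linarith
      · have : |δ| = (α - β) / 2 := by rw [hδ, abs_div, (abs_of_pos (by norm_num : (0:ℝ) < 2)), _root_.abs_of_nonneg (by linarith)]
        rw [this, hγ]
        have : -φ₁ ≤ β := by have := neg_abs_le β; linarith [hwa]
        have := le_max_right φ φ₁; linarith
    linarith
  have hmaxlt : max φ φ₁ < Real.pi := by
    rcases max_cases φ φ₁ with ⟨h, _⟩ | ⟨h, _⟩ <;> rw [h] <;> linarith
  have hargsum : (z + w).arg = γ + Complex.arg u := by
    have h5 : z + w = ↑(‖u‖) * Complex.exp (↑(γ + Complex.arg u) * I) := by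
      rw [hsum]
      conv_lhs => rw [← Complex.norm_mul_exp_arg_mul_I u]
      push_cast
      rw [add_mul, Complex.exp_add]
      ring
    rw [h5, Complex.exp_mul_I]
    exact Complex.arg_mul_cos_add_sin_mul_I (θ := γ + Complex.arg u) huabspos
      ⟨by linarith [Real.pi_pos], by linarith⟩
  constructor
  · rw [hargsum]
    exact abs_le.mpr ⟨hlb, hub⟩
  · exact hlow

set_option maxHeartbeats 1600000 in
/-- Uniform boundedness of
`σ₂(ξ,λ) = Σ_{k=0}^l |λ|^{1−k/l} â_k(ξ)(iξ)^k [A(ξ)+λ+L(ξ)]⁻¹` for `λ ∈ S_φ`,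
`|λ| ≥ λ₀ > 0`, with `A(ξ)` uniformly `φ`-positive, `â_k` bounded and
`|L(ξ)| > C|ξ|^l Σ_k |â_k(ξ)|`. -/
theorem sigma2_convolution_symbol_bound {E : Type*} [NormedAddCommGroup E]
    [NormedSpace ℂ E]
    (φ φ₁ M lam₀ Ca Cb : ℝ) (hφ : 0 ≤ φ) (hφ₁ : 0 ≤ φ₁)
    (hangle : φ + φ₁ < Real.pi) (hM : 0 < M) (hlam₀ : 0 < lam₀)
    (hCa : 0 ≤ Ca) (hCb : 0 < Cb) (l : ℕ) (hl : 0 < l)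
    (A : ℝ → E →L[ℂ] E) (R : ℝ → ℂ → E →L[ℂ] E)
    (hinv : ∀ (ξ : ℝ) (mu : ℂ), |mu.arg| ≤ max φ φ₁ →
      (A ξ + mu • ContinuousLinearMap.id ℂ E).comp (R ξ mu) = ContinuousLinearMap.id ℂ E ∧
      (R ξ mu).comp (A ξ + mu • ContinuousLinearMap.id ℂ E) = ContinuousLinearMap.id ℂ E)
    (hbound : ∀ (ξ : ℝ) (mu : ℂ), |mu.arg| ≤ max φ φ₁ → ‖R ξ mu‖ ≤ M * (1 + ‖mu‖)⁻¹)
    (a : ℕ → ℝ → ℂ) (ha : ∀ (k : ℕ) (ξ : ℝ), ‖a k ξ‖ ≤ Ca)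
    (L : ℝ → ℂ)
    (hLdef : ∀ ξ : ℝ, L ξ = ∑ k ∈ Finset.range (l + 1), a k ξ * (Complex.I * ξ) ^ k)
    (hLsec : ∀ ξ : ℝ, |(L ξ).arg| ≤ φ₁)
    (hLlow : ∀ ξ : ℝ, Cb * |ξ| ^ l * ∑ k ∈ Finset.range (l + 1), ‖a k ξ‖ < ‖L ξ‖) :
    ∃ Cc > (0 : ℝ), ∀ (ξ : ℝ) (lam : ℂ), |lam.arg| ≤ φ → lam₀ ≤ ‖lam‖ →
      ‖∑ k ∈ Finset.range (l + 1),
          ((‖lam‖ ^ (1 - (k : ℝ) / (l : ℝ)) : ℝ) : ℂ) •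
            ((a k ξ * (Complex.I * ξ) ^ k) • R ξ (lam + L ξ))‖ ≤ Cc := by
  set c := Real.cos ((φ + φ₁) / 2) with hcdef
  have hc : 0 < c :=
    Real.cos_pos_of_mem_Ioo ⟨by linarith [Real.pi_pos], by linarith⟩
  set K := ((l : ℝ) + 1) * Ca + Cb⁻¹ with hKdef
  have hK : 0 < K := by
    have : 0 < Cb⁻¹ := inv_pos.mpr hCb
    have : 0 ≤ ((l : ℝ) + 1) * Ca := by positivity
    rw [hKdef]; linarith
  refine ⟨M * K / c, div_pos (mul_pos hM hK) hc, ?_⟩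
  intro ξ lam hargl hnorml
  set S := ∑ k ∈ Finset.range (l + 1), ‖a k ξ‖ with hSdef
  have hS0 : 0 ≤ S := Finset.sum_nonneg fun k _ => norm_nonneg _
  have hlamne : lam ≠ 0 := by
    intro h; rw [h] at hnorml; simp at hnorml; linarith
  have hLpos : 0 < ‖L ξ‖ := by
    have h := hLlow ξ
    have : 0 ≤ Cb * |ξ| ^ l * S := by positivity
    rw [← hSdef] at h; linarith
  have hLne : L ξ ≠ 0 := by
    intro h; rw [h] at hLpos; simp at hLpos
  obtain ⟨hargmu, hlowmu⟩ :=
    sector_add hφ hφ₁ hangle hlamne hLne hargl (hLsec ξ)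
  set mu := lam + L ξ with hmudef
  set P := ‖lam‖ + ‖L ξ‖ with hPdef
  have hP : 0 < P := by rw [hPdef]; linarith
  have hmu_norm : c * P ≤ ‖mu‖ := by
    simpa [hPdef, hcdef] using hlowmu
  have hmupos : 0 < ‖mu‖ := lt_of_lt_of_le (by positivity) hmu_norm
  have hRb : ‖R ξ mu‖ ≤ M * (c * P)⁻¹ := by
    refine (hbound ξ mu hargmu).trans ?_
    have hinvle : (1 + ‖mu‖)⁻¹ ≤ (c * P)⁻¹ := by
      apply inv_anti₀ (by positivity)
      linarith
    exact mul_le_mul_of_nonneg_left hinvle hM.le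
  have hterm : ∀ k ∈ Finset.range (l + 1),
      ‖((‖lam‖ ^ (1 - (k : ℝ) / (l : ℝ)) : ℝ) : ℂ) •
          ((a k ξ * (Complex.I * ξ) ^ k) • R ξ mu)‖ ≤
        M * (c * P)⁻¹ * ((‖lam‖ + |ξ| ^ l) * ‖a k ξ‖) := by
    intro k hk
    have hk' : (k : ℝ) ≤ (l : ℝ) := by
      exact_mod_cast Nat.lt_succ_iff.mp (Finset.mem_range.mp hk)
    have hl' : (0 : ℝ) < (l : ℝ) := by exact_mod_cast hl
    have hkl : (k : ℝ) / (l : ℝ) ≤ 1 := by rw [div_le_one hl']; exact hk'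
    have hkl0 : 0 ≤ (k : ℝ) / (l : ℝ) := by positivity
    have h1 : ‖((‖lam‖ ^ (1 - (k : ℝ) / (l : ℝ)) : ℝ) : ℂ)‖ =
        ‖lam‖ ^ (1 - (k : ℝ) / (l : ℝ)) := by
      rw [Complex.norm_real, Real.norm_eq_abs,
        _root_.abs_of_nonneg (Real.rpow_nonneg (norm_nonneg lam) _)]
    have h2 : ‖a k ξ * (Complex.I * (ξ : ℂ)) ^ k‖ = ‖a k ξ‖ * |ξ| ^ k := by
      rw [norm_mul, norm_pow, norm_mul, Complex.norm_I, one_mul, Complex.norm_real,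
        Real.norm_eq_abs]
    have hgm : ‖lam‖ ^ (1 - (k : ℝ) / (l : ℝ)) * |ξ| ^ k ≤ ‖lam‖ + |ξ| ^ l := by
      have hrp : ((|ξ| ^ l : ℝ)) ^ ((k : ℝ) / (l : ℝ)) = |ξ| ^ k := by
        rw [← Real.rpow_natCast |ξ| l, ← Real.rpow_mul (abs_nonneg ξ),
          show (l : ℝ) * ((k : ℝ) / (l : ℝ)) = (k : ℝ) by field_simp,
          Real.rpow_natCast]
      have := Real.geom_mean_le_arith_mean2_weighted
        (by linarith : (0:ℝ) ≤ 1 - (k : ℝ) / (l : ℝ)) hkl0 (norm_nonneg lam)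
        (by positivity : (0:ℝ) ≤ |ξ| ^ l) (by ring)
      rw [hrp] at this
      have h4 : (1 - (k : ℝ) / (l : ℝ)) * ‖lam‖ ≤ ‖lam‖ := by
        nlinarith [norm_nonneg lam]
      have h5 : ((k : ℝ) / (l : ℝ)) * (|ξ| ^ l) ≤ |ξ| ^ l := by
        nlinarith [pow_nonneg (abs_nonneg ξ) l]
      linarith
    calc ‖((‖lam‖ ^ (1 - (k : ℝ) / (l : ℝ)) : ℝ) : ℂ) •
          ((a k ξ * (Complex.I * ξ) ^ k) • R ξ mu)‖
        = ‖lam‖ ^ (1 - (k : ℝ) / (l : ℝ)) * (‖a k ξ‖ * |ξ| ^ k) * ‖R ξ mu‖ := by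
          rw [norm_smul _ ((a k ξ * (Complex.I * ξ) ^ k) • R ξ mu),
            norm_smul (a k ξ * (Complex.I * ξ) ^ k) (R ξ mu), h1, h2]; ring
      _ = ‖lam‖ ^ (1 - (k : ℝ) / (l : ℝ)) * |ξ| ^ k * ‖a k ξ‖ * ‖R ξ mu‖ := by ring
      _ ≤ (‖lam‖ + |ξ| ^ l) * ‖a k ξ‖ * (M * (c * P)⁻¹) := by
          apply mul_le_mul (mul_le_mul_of_nonneg_right hgm (norm_nonneg _)) hRb
            (norm_nonneg _) (by positivity)
      _ = M * (c * P)⁻¹ * ((‖lam‖ + |ξ| ^ l) * ‖a k ξ‖) := by ring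
  have hS_le : S ≤ ((l : ℝ) + 1) * Ca := by
    rw [hSdef]
    calc ∑ k ∈ Finset.range (l + 1), ‖a k ξ‖ ≤ ∑ _k ∈ Finset.range (l + 1), Ca :=
          Finset.sum_le_sum fun k _ => ha k ξ
      _ = ((l : ℝ) + 1) * Ca := by
          rw [Finset.sum_const, Finset.card_range, nsmul_eq_mul]; push_cast; ring
  have hxi : |ξ| ^ l * S ≤ Cb⁻¹ * ‖L ξ‖ := by
    have h := (hLlow ξ).le
    rw [← hSdef, mul_assoc] at h
    calc |ξ| ^ l * S = Cb⁻¹ * (Cb * (|ξ| ^ l * S)) := by field_simp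
      _ ≤ Cb⁻¹ * ‖L ξ‖ := mul_le_mul_of_nonneg_left h (inv_nonneg.mpr hCb.le)
  have hkey : (‖lam‖ + |ξ| ^ l) * S ≤ K * P := by
    have h1 : ‖lam‖ * S ≤ ‖lam‖ * (((l : ℝ) + 1) * Ca) :=
      mul_le_mul_of_nonneg_left hS_le (norm_nonneg lam)
    have h2 : (0:ℝ) ≤ Cb⁻¹ := inv_nonneg.mpr hCb.le
    have h3 : (0:ℝ) ≤ ((l : ℝ) + 1) * Ca := by positivity
    rw [hKdef, hPdef]
    nlinarith [h1, hxi, mul_nonneg h2 (norm_nonneg lam),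
      mul_nonneg h3 (norm_nonneg (L ξ))]
  calc ‖∑ k ∈ Finset.range (l + 1),
        ((‖lam‖ ^ (1 - (k : ℝ) / (l : ℝ)) : ℝ) : ℂ) •
          ((a k ξ * (Complex.I * ξ) ^ k) • R ξ mu)‖
      ≤ ∑ k ∈ Finset.range (l + 1),
          ‖((‖lam‖ ^ (1 - (k : ℝ) / (l : ℝ)) : ℝ) : ℂ) •
            ((a k ξ * (Complex.I * ξ) ^ k) • R ξ mu)‖ := norm_sum_le _ _
    _ ≤ ∑ k ∈ Finset.range (l + 1),
          M * (c * P)⁻¹ * ((‖lam‖ + |ξ| ^ l) * ‖a k ξ‖) := Finset.sum_le_sum hterm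
    _ = M * (c * P)⁻¹ * ((‖lam‖ + |ξ| ^ l) * S) := by
        rw [← Finset.mul_sum, ← Finset.mul_sum]
    _ ≤ M * (c * P)⁻¹ * (K * P) := by
        apply mul_le_mul_of_nonneg_left hkey (by positivity)
    _ = M * K / c := by field_simp
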